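/- Let Γ₁ = C₃⁻ • K_{n−2} be the signed graph on n vertices obtained by identifying one vertex of the all-positive complete graph K_{n−2} with one vertex of an unbalanced triangle C₃⁻ (triangle with exactly one negative edge), where the two edges of C₃⁻ incident to the identified vertex are positive. Then λ₁(Γ₁) > n − 3 for n ≥ 5. -/

import Mathlib

open Matrix

/-- The largest eigenvalue (index) of a real symmetric matrix. -/
noncomputable def lam1 {n : ℕ} (A : Matrix (Fin n) (Fin n) ℝ) (hA : A.IsHermitian) : ℝ :=
  ⨆ i, hA.eigenvalues i

/-- The adjacency matrix of the signed graph `Γ₁ = C₃⁻ • K_{n−2}`: vertices `0` and `1` are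
joined by a negative edge, both are joined positively to vertex `2`, the vertices
`2, 3, …, n−1` form an all-positive clique, and there are no other edges. -/
def gamma1 (n : ℕ) : Matrix (Fin n) (Fin n) ℝ := fun i j =>
  if i = j then 0
  else if (i.val = 0 ∧ j.val = 1) ∨ (i.val = 1 ∧ j.val = 0) then -1
  else if (i.val ≤ 1 ∧ j.val = 2) ∨ (j.val ≤ 1 ∧ i.val = 2) then 1
  else if 2 ≤ i.val ∧ 2 ≤ j.val then 1
  else 0

lemma rayleigh_le {n : ℕ} {A : Matrix (Fin n) (Fin n) ℝ} (hA : A.IsHermitian)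
    [Nonempty (Fin n)] (x : Fin n → ℝ) :
    x ⬝ᵥ (A *ᵥ x) ≤ (⨆ i, hA.eigenvalues i) * (x ⬝ᵥ x) := by
  set U : Matrix (Fin n) (Fin n) ℝ := (hA.eigenvectorUnitary : Matrix (Fin n) (Fin n) ℝ) with hUdef
  set y : Fin n → ℝ := star U *ᵥ x with hy
  have hU : U * star U = 1 := Matrix.mem_unitaryGroup_iff.mp hA.eigenvectorUnitary.2
  have hstar : star U = Uᵀ := by
    rw [Matrix.star_eq_conjTranspose, Matrix.conjTranspose_eq_transpose_of_trivial]
  have hQ : x ⬝ᵥ (A *ᵥ x) = ∑ i, hA.eigenvalues i * (y i)^2 := by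
    conv_lhs => rw [hA.spectral_theorem, Unitary.conjStarAlgAut_apply]
    rw [← Matrix.mulVec_mulVec, ← Matrix.mulVec_mulVec, Matrix.dotProduct_mulVec,
      ← Matrix.mulVec_transpose, ← hstar, ← hUdef, ← hy]
    simp [dotProduct, Matrix.mulVec_diagonal, sq]
    ring_nf
    exact Finset.sum_congr rfl fun i _ => by ring
  have hN : y ⬝ᵥ y = x ⬝ᵥ x := by
    rw [hy, Matrix.dotProduct_mulVec, ← Matrix.mulVec_transpose, hstar,
      Matrix.transpose_transpose, Matrix.mulVec_mulVec, ← hstar, hU, Matrix.one_mulVec]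
  have hbdd : ∀ i, hA.eigenvalues i ≤ ⨆ j, hA.eigenvalues j := fun i =>
    le_ciSup (Set.Finite.bddAbove (Set.finite_range _)) i
  calc x ⬝ᵥ (A *ᵥ x) = ∑ i, hA.eigenvalues i * (y i)^2 := hQ
    _ ≤ ∑ i, (⨆ j, hA.eigenvalues j) * (y i)^2 := by
        apply Finset.sum_le_sum
        intro i _
        exact mul_le_mul_of_nonneg_right (hbdd i) (sq_nonneg _)
    _ = (⨆ j, hA.eigenvalues j) * (y ⬝ᵥ y) := by
        rw [← Finset.mul_sum]; congr 1; simp [dotProduct, sq]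
    _ = _ := by rw [hN]


set_option linter.unusedTactic false in
lemma pt_nat (s : ℝ) (a b : ℕ) :
    (if a ≤ 1 then s else 1) *
      ((if a = b then (0:ℝ)
        else if (a = 0 ∧ b = 1) ∨ (a = 1 ∧ b = 0) then -1
        else if (a ≤ 1 ∧ b = 2) ∨ (b ≤ 1 ∧ a = 2) then 1
        else if 2 ≤ a ∧ 2 ≤ b then 1 else 0) *
       (if b ≤ 1 then s else 1)) =
    (if 2 ≤ a then (1:ℝ) else 0) * (if 2 ≤ b then 1 else 0)
      - (if a = b then (if 2 ≤ a then (1:ℝ) else 0) else 0)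
      + s * (if a = 0 ∧ b = 2 then 1 else 0)
      + s * (if a = 2 ∧ b = 0 then 1 else 0)
      + s * (if a = 1 ∧ b = 2 then 1 else 0)
      + s * (if a = 2 ∧ b = 1 then 1 else 0)
      - s^2 * (if a = 0 ∧ b = 1 then 1 else 0)
      - s^2 * (if a = 1 ∧ b = 0 then 1 else 0) := by
  rcases (by omega : a = 0 ∨ a = 1 ∨ a = 2 ∨ 3 ≤ a) with ha | ha | ha | ha <;>
  rcases (by omega : b = 0 ∨ b = 1 ∨ b = 2 ∨ 3 ≤ b) with hb | hb | hb | hb <;>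
  (try simp only [ha, hb]) <;>
  norm_num <;>
  (try simp only [show ¬ a ≤ 1 from by omega, show 2 ≤ a from by omega,
      show a ≠ 0 from by omega, show a ≠ 1 from by omega, show a ≠ 2 from by omega,
      show (0:ℕ) ≠ a from by omega, show (1:ℕ) ≠ a from by omega,
      show (2:ℕ) ≠ a from by omega]) <;>
  (try simp only [show ¬ b ≤ 1 from by omega, show 2 ≤ b from by omega,
      show b ≠ 0 from by omega, show b ≠ 1 from by omega, show b ≠ 2 from by omega,
      show (0:ℕ) ≠ b from by omega, show (1:ℕ) ≠ b from by omega,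
      show (2:ℕ) ≠ b from by omega]) <;>
  (try norm_num) <;>
  (try ring1) <;>
  (rcases eq_or_ne a b with hab | hab <;>
    simp [hab, show ¬ b ≤ 1 from by omega, show 2 ≤ b from by omega])

lemma sum_ind_val {n : ℕ} {k : ℕ} (hk : k < n) :
    ∑ i : Fin n, (if i.val = k then (1:ℝ) else 0) = 1 := by
  rw [Finset.sum_eq_single (⟨k, hk⟩ : Fin n)]
  · simp
  · intro b _ hb
    simp only [ite_eq_right_iff]
    intro h; exact absurd (Fin.ext h) hb
  · simp

lemma sum_ind_ge2 {n : ℕ} (hn : 2 ≤ n) :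
    ∑ i : Fin n, (if 2 ≤ i.val then (1:ℝ) else 0) = (n:ℝ) - 2 := by
  rw [Fin.sum_univ_eq_sum_range (fun j => if 2 ≤ j then (1:ℝ) else 0)]
  rw [Finset.sum_ite, Finset.sum_const, Finset.sum_const]
  have : Finset.filter (fun j => 2 ≤ j) (Finset.range n) = Finset.Ico 2 n := by
    ext j; simp; omega
  rw [this, Nat.card_Ico]
  have : ((n - 2 : ℕ) : ℝ) = (n:ℝ) - 2 := by push_cast [hn]; ring
  simp [this]

lemma sum_pair {n : ℕ} {a b : ℕ} (ha : a < n) (hb : b < n) :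
    ∑ i : Fin n, ∑ j : Fin n, (if i.val = a ∧ j.val = b then (1:ℝ) else 0) = 1 := by
  have h1 : ∀ i : Fin n, ∑ j : Fin n, (if i.val = a ∧ j.val = b then (1:ℝ) else 0)
      = if i.val = a then 1 else 0 := by
    intro i
    by_cases h : i.val = a
    · simp only [h, true_and, if_true]; exact sum_ind_val hb
    · simp [h]
  rw [Finset.sum_congr rfl (fun i _ => h1 i)]
  exact sum_ind_val ha

/-- For `n ≥ 5`, the index of `Γ₁ = C₃⁻ • K_{n−2}` satisfies `λ₁(Γ₁) > n − 3`. -/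
theorem stmt2 {n : ℕ} (hn : 5 ≤ n) (hA : (gamma1 n).IsHermitian) :
    (n : ℝ) - 3 < lam1 (gamma1 n) hA := by
  haveI : Nonempty (Fin n) := ⟨⟨0, by omega⟩⟩
  have h0 : (0:ℕ) < n := by omega
  have h1 : (1:ℕ) < n := by omega
  have h2 : (2:ℕ) < n := by omega
  have hn2 : (0:ℝ) < (n:ℝ) - 2 := by
    have : (5:ℝ) ≤ (n:ℝ) := by exact_mod_cast hn
    linarith
  set s : ℝ := 1 / ((n:ℝ) - 2) with hs
  have hs0 : 0 < s := by positivity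
  have hsn : ((n:ℝ) - 2) * s = 1 := by
    rw [hs]; field_simp
  set x : Fin n → ℝ := fun i => if i.val ≤ 1 then s else 1 with hx
  set f : Fin n → ℝ := fun i => if 2 ≤ i.val then 1 else 0 with hf
  have hfsum : ∑ i, f i = (n:ℝ) - 2 := sum_ind_ge2 (by omega)
  have hpt : ∀ i j : Fin n, x i * (gamma1 n i j * x j) =
      f i * f j - (if i = j then f i else 0)
      + s * (if i.val = 0 ∧ j.val = 2 then 1 else 0)
      + s * (if i.val = 2 ∧ j.val = 0 then 1 else 0)
      + s * (if i.val = 1 ∧ j.val = 2 then 1 else 0)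
      + s * (if i.val = 2 ∧ j.val = 1 then 1 else 0)
      - s^2 * (if i.val = 0 ∧ j.val = 1 then 1 else 0)
      - s^2 * (if i.val = 1 ∧ j.val = 0 then 1 else 0) := by
    intro i j
    have h := pt_nat s i.val j.val
    simp only [hx, hf, gamma1]
    simp only [Fin.ext_iff]
    exact h
  have hQ : x ⬝ᵥ (gamma1 n *ᵥ x) =
      ((n:ℝ)-2) * ((n:ℝ)-2) - ((n:ℝ)-2) + 4*s - 2*s^2 := by
    have e1 : x ⬝ᵥ (gamma1 n *ᵥ x) = ∑ i, ∑ j, x i * (gamma1 n i j * x j) := by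
      simp [dotProduct, Matrix.mulVec, Finset.mul_sum]
    rw [e1, Finset.sum_congr rfl (fun i _ => Finset.sum_congr rfl (fun j _ => hpt i j))]
    simp only [Finset.sum_add_distrib, Finset.sum_sub_distrib, ← Finset.mul_sum,
      ← Finset.sum_mul]
    rw [sum_pair h0 h2, sum_pair h2 h0, sum_pair h1 h2, sum_pair h2 h1,
      sum_pair h0 h1, sum_pair h1 h0]
    have hdiag : ∑ i : Fin n, ∑ j : Fin n, (if i = j then f i else 0) = ∑ i, f i := by
      apply Finset.sum_congr rfl
      intro i _
      simp [Finset.sum_ite_eq]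
    rw [hdiag, hfsum]
    ring
  have hNval : x ⬝ᵥ x = ((n:ℝ)-2) + 2*s^2 := by
    have : ∀ i : Fin n, x i * x i = f i + s^2 * (if i.val = 0 then 1 else 0)
        + s^2 * (if i.val = 1 then 1 else 0) := by
      intro i
      simp only [hx, hf]
      split_ifs <;> first | (exfalso; omega) | ring1
    simp only [dotProduct]
    rw [Finset.sum_congr rfl (fun i _ => this i)]
    simp only [Finset.sum_add_distrib, ← Finset.mul_sum]
    rw [hfsum, sum_ind_val h0, sum_ind_val h1]
    ring
  have hray := rayleigh_le hA x
  have hN0 : 0 < x ⬝ᵥ x := by rw [hNval]; positivity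
  have hkey : ((n:ℝ)-3) * (x ⬝ᵥ x) < x ⬝ᵥ (gamma1 n *ᵥ x) := by
    rw [hQ, hNval]
    have h2s : ((n:ℝ)-2) * s^2 = s := by
      rw [sq, ← mul_assoc, hsn, one_mul]
    nlinarith [hs0, h2s]
  have : ((n:ℝ)-3) * (x ⬝ᵥ x) < (⨆ i, hA.eigenvalues i) * (x ⬝ᵥ x) :=
    lt_of_lt_of_le hkey hray
  exact lt_of_mul_lt_mul_right this (le_of_lt hN0)
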